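/- Let G be a finite connected multigraph with edges labeled by colors in {1,...,d}, and define P(G) as the poset of pairs (H,S) with S ⊆ {1,...,d} and H a connected component of the subgraph G_S of edges with labels in S, ordered by (H,S) ≤ (H',S') iff S' ⊆ S and H' ⊆ H. Then P(G) is a simplicial poset of rank d: it has a unique minimal element (G,{1,...,d}), and every interval [(G,{1,...,d}),(H,S)] is isomorphic to the Boolean lattice of subsets of the complement of S. -/

import Mathlib

/-- Reachability in the subgraph `G_S` of the edge-labeled multigraph given by `adj`,
keeping only edges whose label lies in `S`. -/
def Reach {V : Type*} {d : ℕ} (adj : Fin d → V → V → Prop) (S : Finset (Fin d)) :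
    V → V → Prop :=
  Relation.ReflTransGen (fun a b => ∃ j ∈ S, adj j a b)

/-- An element of `P(G)`: a pair `(S, H)` with `H` a connected component of `G_S`. -/
def IsElem {V : Type*} {d : ℕ} (adj : Fin d → V → V → Prop)
    (p : Finset (Fin d) × Set V) : Prop :=
  ∃ v : V, p.2 = {u | Reach adj p.1 v u}

/-- The order on `P(G)`: `(S,H) ≤ (S',H')` iff `S' ⊆ S` and `H' ⊆ H`. -/
def LeP {V : Type*} {d : ℕ} (p q : Finset (Fin d) × Set V) : Prop :=
  q.1 ⊆ p.1 ∧ q.2 ⊆ p.2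

section Aux
variable {V : Type*} {d : ℕ} {adj : Fin d → V → V → Prop}

lemma reach_mono {S T : Finset (Fin d)} (h : S ⊆ T) {u w : V}
    (hr : Reach adj S u w) : Reach adj T u w :=
  Relation.ReflTransGen.mono (r := fun a b => ∃ j ∈ S, adj j a b)
    (p := fun a b => ∃ j ∈ T, adj j a b) (fun _ _ ⟨j, hj, hab⟩ => ⟨j, h hj, hab⟩) _ _ hr

lemma reach_symm (hsym : ∀ j u v, adj j u v → adj j v u) {S : Finset (Fin d)} {u w : V}
    (hr : Reach adj S u w) : Reach adj S w u := by
  induction hr with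
  | refl => exact .refl
  | tail _ h ih =>
    obtain ⟨j, hj, hab⟩ := h
    exact Relation.ReflTransGen.trans (.single ⟨j, hj, hsym j _ _ hab⟩) ih

lemma comp_eq (hsym : ∀ j u v, adj j u v → adj j v u) {S : Finset (Fin d)} {w v : V}
    (hwv : Reach adj S w v) :
    {u | Reach adj S w u} = {u | Reach adj S v u} := by
  ext u
  exact ⟨fun h => ((reach_symm hsym hwv).trans h),
         fun h => hwv.trans h⟩

end Aux

/-- For a finite connected edge-labeled multigraph `G` with labels in `{1,…,d}`, the
poset `P(G)` of pairs `(S, H)`, `H` a connected component of `G_S`, ordered by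
`(S,H) ≤ (S',H')` iff `S' ⊆ S` and `H' ⊆ H`, is a simplicial poset of rank `d`:
`(univ, V)` is its unique minimal element, and each interval below an element `p` is
order-isomorphic to the Boolean lattice of subsets of the complement of `p.1`. -/
theorem stmt16 (V : Type) [Fintype V] (hV : Nonempty V) (d : ℕ)
    (adj : Fin d → V → V → Prop) (hsym : ∀ j u v, adj j u v → adj j v u)
    (hconn : ∀ u v : V, Reach adj Finset.univ u v) :
    IsElem adj (Finset.univ, Set.univ) ∧
      (∀ p, IsElem adj p → LeP (Finset.univ, Set.univ) p) ∧
      (∀ p, IsElem adj p →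
        ∃ e : {q : Finset (Fin d) × Set V //
            IsElem adj q ∧ LeP (Finset.univ, Set.univ) q ∧ LeP q p} ≃
            Finset {j : Fin d // j ∉ p.1},
          ∀ a b, LeP a.1 b.1 ↔ e a ⊆ e b) := by
  classical
  obtain ⟨v0⟩ := hV
  refine ⟨⟨v0, ?_⟩, fun p _ => ⟨Finset.subset_univ _, Set.subset_univ _⟩, ?_⟩
  · ext u; simpa using hconn v0 u
  intro p hp
  obtain ⟨v, hv⟩ := hp
  -- key: every element of the interval is the component of `v` in its own subgraph
  have key : ∀ q : Finset (Fin d) × Set V, IsElem adj q → LeP q p →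
      q.2 = {u | Reach adj q.1 v u} := by
    intro q hq hle
    obtain ⟨w, hw⟩ := hq
    have hvq : v ∈ q.2 := hle.2 (by rw [hv]; exact Set.mem_setOf.2 Relation.ReflTransGen.refl)
    rw [hw] at hvq ⊢
    exact comp_eq hsym hvq
  -- the forward map
  set toF : {q : Finset (Fin d) × Set V //
      IsElem adj q ∧ LeP (Finset.univ, Set.univ) q ∧ LeP q p} → Finset {j : Fin d // j ∉ p.1} :=
    fun q => Finset.univ.filter (fun j => j.1 ∉ q.1.1) with htoF
  -- the backward map
  have mkmem : ∀ A : Finset {j : Fin d // j ∉ p.1},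
      let T := p.1 ∪ (Aᶜ.map (Function.Embedding.subtype _))
      IsElem adj (T, {u | Reach adj T v u}) ∧
        LeP (Finset.univ, Set.univ) (T, {u | Reach adj T v u}) ∧
        LeP (T, {u | Reach adj T v u}) p := by
    intro A T
    refine ⟨⟨v, rfl⟩, ⟨Finset.subset_univ _, Set.subset_univ _⟩,
      Finset.subset_union_left, ?_⟩
    rw [hv]
    exact fun u hu => reach_mono Finset.subset_union_left hu
  set invF : Finset {j : Fin d // j ∉ p.1} → {q : Finset (Fin d) × Set V //
      IsElem adj q ∧ LeP (Finset.univ, Set.univ) q ∧ LeP q p} :=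
    fun A => ⟨(p.1 ∪ (Aᶜ.map (Function.Embedding.subtype _)),
      {u | Reach adj (p.1 ∪ (Aᶜ.map (Function.Embedding.subtype _))) v u}), mkmem A⟩ with hinvF
  have hleft : ∀ q, invF (toF q) = q := by
    intro q
    have hS : p.1 ∪ ((toF q)ᶜ.map (Function.Embedding.subtype _)) = q.1.1 := by
      ext j
      simp only [htoF, Finset.mem_union, Finset.mem_map, Finset.mem_compl,
        Finset.mem_filter, Finset.mem_univ, true_and, Function.Embedding.coe_subtype,
        not_not]
      constructor
      · rintro (hj | ⟨⟨j', hj'⟩, hj2, rfl⟩)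
        · exact q.2.2.2.1 hj
        · exact hj2
      · intro hj
        by_cases hjp : j ∈ p.1
        · exact Or.inl hjp
        · exact Or.inr ⟨⟨j, hjp⟩, hj, rfl⟩
    apply Subtype.ext
    have := key q.1 q.2.1 q.2.2.2
    refine Prod.ext ?_ ?_ <;> simp only [hinvF, hS]
    · exact this.symm
  have hright : ∀ A, toF (invF A) = A := by
    intro A
    ext j
    simp only [htoF, hinvF, Finset.mem_filter, Finset.mem_univ, true_and,
      Finset.mem_union, Finset.mem_map, Finset.mem_compl, Function.Embedding.coe_subtype,
      not_or, not_exists]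
    constructor
    · rintro ⟨-, h2⟩
      by_contra hA
      exact h2 j ⟨hA, rfl⟩
    · intro hA
      refine ⟨j.2, fun x hx => hx.1 ?_⟩
      have : x = j := Subtype.ext hx.2
      rwa [this]
  refine ⟨⟨toF, invF, hleft, hright⟩, ?_⟩
  intro a b
  simp only [Equiv.coe_fn_mk]
  constructor
  · intro hab j hj
    simp only [htoF, Finset.mem_filter, Finset.mem_univ, true_and] at hj ⊢
    exact fun h => hj (hab.1 h)
  · intro hsub
    have h1 : b.1.1 ⊆ a.1.1 := by
      intro j hj
      by_cases hjp : j ∈ p.1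
      · exact a.2.2.2.1 hjp
      · by_contra hja
        have : (⟨j, hjp⟩ : {j : Fin d // j ∉ p.1}) ∈ toF a := by
          simp [htoF, hja]
        have := hsub this
        simp only [htoF, Finset.mem_filter, Finset.mem_univ, true_and] at this
        exact this hj
    refine ⟨h1, ?_⟩
    rw [key a.1 a.2.1 a.2.2.2, key b.1 b.2.1 b.2.2.2]
    exact fun u hu => reach_mono h1 hu
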